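/- The free Burnside group B(n,3) of exponent 3 has the property that for any elements a, b, c, the triple commutator ((a,b),c) is central, and ((x,r),x) = 1 for all x, r ∈ B(n,3). -/

import Mathlib

open scoped commutatorElement

set_option maxHeartbeats 1000000

section RingLemmas
variable {R : Type*} [Ring R]

lemma ring_pair (hchar : ∀ z : R, z + z = 0 → z = 0) (s t : R)
    (hs : (s - 1) * (s - 1) = 0)
    (hst : (s * t - 1) * (s * t - 1) = 0)
    (hst' : (s * (2 - t) - 1) * (s * (2 - t) - 1) = 0) :
    (s - 1) * (t - 1) * (s - 1) = 0 ∧ (s - 1) * (t - 1) = -((t - 1) * (s - 1)) := by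
  set A := s - 1 with hA
  set B := t - 1 with hB
  have hAA : A * A = 0 := hs
  have key1 : A * B + B * A + A * B * A = 0 := by
    apply hchar
    have expand : (A * B + B * A + A * B * A) + (A * B + B * A + A * B * A)
        = (s * t - 1) * (s * t - 1) - (s * (2 - t) - 1) * (s * (2 - t) - 1)
          - (A * A) * B - (A * A) * B := by
      rw [hA, hB]; noncomm_ring
    rw [expand, hst, hst', hAA]; simp
  have key2 : A * B * A = 0 := by
    have h0 : A * (A * B + B * A + A * B * A) = 0 := by rw [key1, mul_zero]
    have expand : A * (A * B + B * A + A * B * A)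
        = A * B * A + (A * A) * B + (A * A) * (B * A) := by noncomm_ring
    rw [expand, hAA] at h0
    simpa using h0
  refine ⟨key2, ?_⟩
  have h1 := key1
  rw [key2, add_zero] at h1
  exact eq_neg_of_add_eq_zero_left h1

lemma ring_triple (hchar : ∀ z : R, z + z = 0 → z = 0) (A B C : R)
    (hAA : A * A = 0) (hBB : B * B = 0) (hCC : C * C = 0)
    (hBA : B * A = -(A * B))
    (hCA : C * A = -(A * C))
    (hCB : C * B = -(B * C))
    (hS : (A + B + C + A*B + A*C + B*C + A*B*C) * (A + B + C + A*B + A*C + B*C + A*B*C) = 0) :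
    A * (B * C) = 0 := by
  have hAA' : ∀ z : R, A * (A * z) = 0 := fun z => by rw [← mul_assoc, hAA, zero_mul]
  have hBB' : ∀ z : R, B * (B * z) = 0 := fun z => by rw [← mul_assoc, hBB, zero_mul]
  have hCC' : ∀ z : R, C * (C * z) = 0 := fun z => by rw [← mul_assoc, hCC, zero_mul]
  have hBA' : ∀ z : R, B * (A * z) = -(A * (B * z)) := fun z => by
    rw [← mul_assoc, hBA, neg_mul, mul_assoc]
  have hCA' : ∀ z : R, C * (A * z) = -(A * (C * z)) := fun z => by
    rw [← mul_assoc, hCA, neg_mul, mul_assoc]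
  have hCB' : ∀ z : R, C * (B * z) = -(B * (C * z)) := fun z => by
    rw [← mul_assoc, hCB, neg_mul, mul_assoc]
  apply hchar
  calc A * (B * C) + A * (B * C)
      = (A + B + C + A*B + A*C + B*C + A*B*C) * (A + B + C + A*B + A*C + B*C + A*B*C) := by
        simp only [add_mul, mul_add, mul_assoc, hAA, hBB, hCC, hAA', hBB', hCC',
          hBA, hCA, hCB, hBA', hCA', hCB', mul_neg, neg_mul, neg_neg, mul_zero, zero_mul,
          add_zero, zero_add, neg_zero]
        abel
    _ = 0 := hS

/-- The key operator-algebra lemma. -/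
lemma operator_lemma {G : Type*} [Group G] {A : Type*} [AddCommGroup A]
    (h3A : ∀ y : A, y + y + y = 0)
    (σ : G → A → A)
    (hadd : ∀ (g : G) (x y : A), σ g (x + y) = σ g x + σ g y)
    (hσmul : ∀ (g k : G) (x : A), σ (g * k) x = σ g (σ k x))
    (hσ1 : ∀ x : A, σ (1 : G) x = x)
    (hsq : ∀ (g : G) (x : A), σ g (σ g x - x) = σ g x - x)
    (b c d : G) (x : A) :
    ((x - σ b x) - σ c (x - σ b x)) - σ d ((x - σ b x) - σ c (x - σ b x)) = 0 := by
  let σ' : G → AddMonoid.End A := fun g => AddMonoidHom.mk' (σ g) (hadd g)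
  have happ : ∀ (g : G) (y : A), σ' g y = σ g y := fun g y => rfl
  have hmul_apply : ∀ (f g : AddMonoid.End A) (y : A), (f * g) y = f (g y) := fun f g y => rfl
  have hsub_apply : ∀ (f g : AddMonoid.End A) (y : A), (f - g) y = f y - g y := fun f g y => rfl
  have hone_apply : ∀ y : A, (1 : AddMonoid.End A) y = y := fun y => rfl
  have hzero_apply : ∀ y : A, (0 : AddMonoid.End A) y = 0 := fun y => rfl
  have hσmul' : ∀ g k : G, σ' (g * k) = σ' g * σ' k := by
    intro g k
    refine AddMonoid.End.ext (h := fun y => ?_)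
    rw [hmul_apply, happ, happ, happ]
    exact hσmul g k y
  have hσ1' : σ' (1 : G) = 1 := by
    refine AddMonoid.End.ext (h := fun y => ?_)
    rw [happ, hone_apply]
    exact hσ1 y
  have hsq' : ∀ g : G, (σ' g - 1) * (σ' g - 1) = 0 := by
    intro g
    refine AddMonoid.End.ext (h := fun y => ?_)
    rw [hmul_apply, hsub_apply, hsub_apply, hone_apply, hone_apply, hzero_apply,
      happ g y, happ g (σ g y - y), hsq g y, sub_self]
  have hchar : ∀ z : AddMonoid.End A, z + z = 0 → z = 0 := by
    intro z hz
    refine AddMonoid.End.ext (h := fun y => ?_)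
    have h1 : z y + z y = 0 := by
      have := congrArg (fun w : AddMonoid.End A => w y) hz
      exact this
    have h2 := h3A (z y)
    rw [h1, zero_add] at h2
    simpa using h2
  have hσinv : ∀ g : G, σ' g⁻¹ = 2 - σ' g := by
    intro g
    have e1 : σ' g * (2 - σ' g) = 1 := by
      have h := hsq' g
      calc σ' g * (2 - σ' g) = 1 - (σ' g - 1) * (σ' g - 1) := by noncomm_ring
        _ = 1 := by rw [h, sub_zero]
    calc σ' g⁻¹ = σ' g⁻¹ * (σ' g * (2 - σ' g)) := by rw [e1, mul_one]
      _ = (σ' g⁻¹ * σ' g) * (2 - σ' g) := by rw [mul_assoc]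
      _ = σ' (g⁻¹ * g) * (2 - σ' g) := by rw [hσmul']
      _ = 2 - σ' g := by rw [inv_mul_cancel, hσ1', one_mul]
  have pair : ∀ p q : G, (σ' p - 1) * (σ' q - 1) * (σ' p - 1) = 0 ∧
      (σ' p - 1) * (σ' q - 1) = -((σ' q - 1) * (σ' p - 1)) := by
    intro p q
    refine ring_pair hchar (σ' p) (σ' q) (hsq' p) ?_ ?_
    · rw [← hσmul']; exact hsq' (p * q)
    · rw [← hσinv, ← hσmul']; exact hsq' (p * q⁻¹)
  have anti : ∀ p q : G, (σ' q - 1) * (σ' p - 1) = -((σ' p - 1) * (σ' q - 1)) := by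
    intro p q
    have h := (pair p q).2
    rw [h, neg_neg]
  have hstu : (σ' d * σ' c * σ' b - 1) * (σ' d * σ' c * σ' b - 1) = 0 := by
    rw [← hσmul', ← hσmul']; exact hsq' (d * c * b)
  have triple : (σ' d - 1) * ((σ' c - 1) * (σ' b - 1)) = 0 := by
    refine ring_triple hchar (σ' d - 1) (σ' c - 1) (σ' b - 1)
      (hsq' d) (hsq' c) (hsq' b) (anti d c) (anti d b) (anti c b) ?_
    calc ((σ' d - 1) + (σ' c - 1) + (σ' b - 1) + (σ' d - 1)*(σ' c - 1) + (σ' d - 1)*(σ' b - 1)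
          + (σ' c - 1)*(σ' b - 1) + (σ' d - 1)*(σ' c - 1)*(σ' b - 1))
        * ((σ' d - 1) + (σ' c - 1) + (σ' b - 1) + (σ' d - 1)*(σ' c - 1) + (σ' d - 1)*(σ' b - 1)
          + (σ' c - 1)*(σ' b - 1) + (σ' d - 1)*(σ' c - 1)*(σ' b - 1))
        = (σ' d * σ' c * σ' b - 1) * (σ' d * σ' c * σ' b - 1) := by noncomm_ring
      _ = 0 := hstu
  have final : ((1 : AddMonoid.End A) - σ' d) * ((1 - σ' c) * (1 - σ' b)) = 0 := by
    calc ((1 : AddMonoid.End A) - σ' d) * ((1 - σ' c) * (1 - σ' b))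
        = -((σ' d - 1) * ((σ' c - 1) * (σ' b - 1))) := by noncomm_ring
      _ = 0 := by rw [triple, neg_zero]
  have := congrArg (fun w : AddMonoid.End A => w x) final
  simp only [hmul_apply, hsub_apply, hone_apply, hzero_apply, happ] at this
  convert this using 2

end RingLemmas

section GroupPart
variable {G : Type*} [Group G]

lemma cube_rw (h : ∀ g : G, g ^ 3 = 1) (a b : G) : a * b * a = b⁻¹ * a⁻¹ * b⁻¹ := by
  have h1 : (a * b) * ((a * b) * (a * b)) = 1 := by
    have := h (a * b); rw [pow_succ, pow_succ, pow_one] at this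
    group at this ⊢; exact this
  have h2 : (a * b * a) * (b * a * b) = 1 := by
    calc (a * b * a) * (b * a * b) = (a * b) * ((a * b) * (a * b)) := by group
    _ = 1 := h1
  have := eq_inv_of_mul_eq_one_left h2
  rw [this]; group

lemma isq (h : ∀ g : G, g ^ 3 = 1) (a : G) : a⁻¹ * a⁻¹ = a := by
  have h1 := h a; rw [pow_succ, pow_succ, pow_one] at h1
  have hinv : a⁻¹ = a * a := by
    refine inv_eq_of_mul_eq_one_right ?_
    rw [← mul_assoc]; exact h1
  calc a⁻¹ * a⁻¹ = (a * a) * (a * a) := by rw [hinv]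
    _ = a * (a * a * a) := by group
    _ = a * 1 := by rw [h1]
    _ = a := mul_one a

lemma engel (h : ∀ g : G, g ^ 3 = 1) (x y : G) : ⁅⁅x, y⁆, x⁆ = 1 := by
  have e1 : x * y * x = y⁻¹ * x⁻¹ * y⁻¹ := cube_rw h x y
  have e2 : x⁻¹ * y * x⁻¹ = y⁻¹ * x * y⁻¹ := by
    have := cube_rw h x⁻¹ y; rwa [inv_inv] at this
  calc ⁅⁅x, y⁆, x⁆
      = x * y * x⁻¹ * y⁻¹ * (x * y * x) * (y⁻¹ * x⁻¹ * x⁻¹) := by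
        rw [commutatorElement_def, commutatorElement_def]; group
    _ = x * y * x⁻¹ * y⁻¹ * (y⁻¹ * x⁻¹ * y⁻¹) * (y⁻¹ * x⁻¹ * x⁻¹) := by rw [e1]
    _ = x * y * x⁻¹ * (y⁻¹ * y⁻¹) * x⁻¹ * ((y⁻¹ * y⁻¹) * (x⁻¹ * x⁻¹)) := by group
    _ = x * y * x⁻¹ * y * x⁻¹ * (y * x) := by rw [isq h, isq h]
    _ = x * y * (x⁻¹ * y * x⁻¹) * (y * x) := by group
    _ = x * y * (y⁻¹ * x * y⁻¹) * (y * x) := by rw [e2]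
    _ = x * x * x := by group
    _ = 1 := by have hx := h x; rw [pow_succ, pow_succ, pow_one] at hx; exact hx

lemma conj_comm (hE : ∀ x y : G, ⁅⁅x, y⁆, x⁆ = 1) (a g k : G) :
    (g * a * g⁻¹) * (k * a * k⁻¹) = (k * a * k⁻¹) * (g * a * g⁻¹) := by
  have h1 : ∀ y : G, Commute ⁅a, y⁆ a := fun y =>
    commutatorElement_eq_one_iff_commute.mp (hE a y)
  have h2 : ∀ m : G, Commute a (m * a * m⁻¹) := by
    intro m
    have e : ⁅a, m⁆⁻¹ * a = m * a * m⁻¹ := by rw [commutatorElement_def]; group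
    rw [← e]
    exact Commute.mul_right (((h1 m).symm).inv_right) (Commute.refl a)
  have h3 : Commute a ((g⁻¹ * k) * a * (g⁻¹ * k)⁻¹) := h2 (g⁻¹ * k)
  have h4 := h3.map ((MulAut.conj g).toMonoidHom)
  simp only [MulEquiv.coe_toMonoidHom, MulAut.conj_apply] at h4
  have e1 : g * (g⁻¹ * k * a * (g⁻¹ * k)⁻¹) * g⁻¹ = k * a * k⁻¹ := by group
  rw [e1] at h4
  exact h4.eq

lemma central_step (h3 : ∀ g : G, g ^ 3 = 1) (a b c d : G) : ⁅⁅⁅a, b⁆, c⁆, d⁆ = 1 := by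
  classical
  have hE : ∀ x y : G, ⁅⁅x, y⁆, x⁆ = 1 := engel h3
  set M : Subgroup G := Subgroup.normalClosure ({a} : Set G) with hMdef
  haveI hMn : M.Normal := Subgroup.normalClosure_normal
  have hcomm : ∀ x ∈ Group.conjugatesOfSet ({a} : Set G),
      ∀ y ∈ Group.conjugatesOfSet ({a} : Set G), x * y = y * x := by
    intro x hx y hy
    rw [Group.mem_conjugatesOfSet_iff] at hx hy
    obtain ⟨x0, hx0, hcx⟩ := hx
    obtain ⟨y0, hy0, hcy⟩ := hy
    rw [Set.mem_singleton_iff] at hx0 hy0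
    rw [hx0] at hcx; rw [hy0] at hcy
    obtain ⟨g, hg⟩ := isConj_iff.mp hcx
    obtain ⟨k, hk⟩ := isConj_iff.mp hcy
    rw [← hg, ← hk]
    exact conj_comm hE a g k
  letI : CommGroup ↥M :=
    { (inferInstance : Group ↥M) with
      mul_comm := fun u v => Subtype.ext <|
        Set.centralizer_centralizer_comm_of_comm hcomm _
          (Subgroup.closure_le_centralizer_centralizer _ u.2) _
          (Subgroup.closure_le_centralizer_centralizer _ v.2) }
  -- conjugation as multiplicative endomorphism of M
  let τ : G → (↥M →* ↥M) := fun g => MonoidHom.mk'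
    (fun u => ⟨g * (u : G) * g⁻¹, hMn.conj_mem _ u.2 g⟩)
    (fun u v => by
      apply Subtype.ext
      show g * ((u : G) * (v : G)) * g⁻¹ = (g * (u : G) * g⁻¹) * (g * (v : G) * g⁻¹)
      group)
  have hτapp : ∀ (g : G) (u : ↥M), ((τ g u : ↥M) : G) = g * (u : G) * g⁻¹ := fun g u => rfl
  -- conjugation as additive endomorphism
  let σ : G → (Additive ↥M →+ Additive ↥M) := fun g => AddMonoidHom.mk'
    (fun x => Additive.ofMul (τ g x.toMul))
    (fun x y => by
      show Additive.ofMul (τ g (x.toMul * y.toMul)) = _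
      rw [map_mul]; rfl)
  have hσapp : ∀ (g : G) (u : ↥M), σ g (Additive.ofMul u) = Additive.ofMul (τ g u) :=
    fun g u => rfl
  have hdiv : ∀ u v : ↥M, Additive.ofMul u - Additive.ofMul v = Additive.ofMul (u * v⁻¹) := by
    intro u v
    rw [← ofMul_div, div_eq_mul_inv]
  have hσmul : ∀ (g k : G) (x : Additive ↥M), σ (g * k) x = σ g (σ k x) := by
    intro g k x
    show Additive.ofMul (τ (g * k) x.toMul) = Additive.ofMul (τ g (τ k x.toMul))
    congr 1
    apply Subtype.ext
    rw [hτapp, hτapp, hτapp]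
    group
  have hσ1 : ∀ x : Additive ↥M, σ (1 : G) x = x := by
    intro x
    show Additive.ofMul (τ 1 x.toMul) = x
    have e : (τ 1 x.toMul : ↥M) = x.toMul := by apply Subtype.ext; rw [hτapp]; group
    rw [e]
    rfl
  have h3M : ∀ y : Additive ↥M, y + y + y = 0 := by
    intro y
    show Additive.ofMul (y.toMul * y.toMul * y.toMul) = 0
    have e : y.toMul * y.toMul * y.toMul = 1 := by
      apply Subtype.ext
      show ((y.toMul : G)) * y.toMul * y.toMul = 1
      have := h3 ((y.toMul : G))
      rw [pow_succ, pow_succ, pow_one] at this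
      exact this
    rw [e]
    rfl
  have hsq : ∀ (g : G) (x : Additive ↥M), σ g (σ g x - x) = σ g x - x := by
    intro g x
    set u : ↥M := x.toMul with hu
    have hx : x = Additive.ofMul u := rfl
    rw [hx, hσapp, hdiv, hσapp]
    congr 1
    apply Subtype.ext
    have hvG : ((τ g u * u⁻¹ : ↥M) : G) = ⁅g, (u : G)⁆ := by
      show (g * (u : G) * g⁻¹) * (u : G)⁻¹ = _
      rw [commutatorElement_def]
    show (g * ((τ g u * u⁻¹ : ↥M) : G) * g⁻¹) = ((τ g u * u⁻¹ : ↥M) : G)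
    rw [hvG]
    have hcomm : Commute ⁅g, (u : G)⁆ g := commutatorElement_eq_one_iff_commute.mp (hE g u)
    have e := hcomm.symm.eq
    rw [e]
    group
  -- translation back to the group
  have ha : a ∈ M := Subgroup.subset_normalClosure rfl
  set a' : ↥M := ⟨a, ha⟩ with ha'
  have htrans : ∀ (g : G) (u : ↥M), ⁅(u : G), g⁆ = ((u * (τ g u)⁻¹ : ↥M) : G) := by
    intro g u
    show _ = (u : G) * (g * (u : G) * g⁻¹)⁻¹
    rw [commutatorElement_def]
    group
  set x0 : Additive ↥M := Additive.ofMul a' with hx0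
  set u1 : ↥M := a' * (τ b a')⁻¹ with hu1def
  set u2 : ↥M := u1 * (τ c u1)⁻¹ with hu2def
  set u3 : ↥M := u2 * (τ d u2)⁻¹ with hu3def
  have e1 : Additive.ofMul u1 = x0 - σ b x0 := by
    rw [hu1def, hx0, ← hdiv, hσapp]
  have e2 : Additive.ofMul u2 = (x0 - σ b x0) - σ c (x0 - σ b x0) := by
    rw [hu2def, ← hdiv, ← e1, hσapp]
  have e3 : Additive.ofMul u3 = ((x0 - σ b x0) - σ c (x0 - σ b x0))
      - σ d ((x0 - σ b x0) - σ c (x0 - σ b x0)) := by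
    rw [hu3def, ← hdiv, ← e2, hσapp]
  have hop := operator_lemma (A := Additive ↥M) (by exact h3M) (fun g => ⇑(σ g))
    (by exact fun g => (σ g).map_add) (by exact hσmul) (by exact hσ1) (by exact hsq) b c d x0
  have hz : u3 = 1 := by
    have h0 : Additive.ofMul u3 = Additive.ofMul (1 : ↥M) := by
      rw [e3]; exact hop
    exact Additive.ofMul.injective h0
  have hu1 : ⁅a, b⁆ = (u1 : G) := htrans b a'
  have hu2 : ⁅⁅a, b⁆, c⁆ = (u2 : G) := by rw [hu1]; exact htrans c u1
  have hu3 : ⁅⁅⁅a, b⁆, c⁆, d⁆ = (u3 : G) := by rw [hu2]; exact htrans d u2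
  rw [hu3, hz]
  rfl

lemma exp_three_pow {α : Type*} :
    ∀ g : PresentedGroup (Set.range fun x : FreeGroup α => x ^ 3), g ^ 3 = 1 := by
  intro g
  induction g using QuotientGroup.induction_on with
  | _ w =>
    show ((w ^ 3 : FreeGroup α) : FreeGroup α ⧸ Subgroup.normalClosure (Set.range fun x : FreeGroup α => x ^ 3)) = 1
    rw [QuotientGroup.eq_one_iff]
    exact Subgroup.subset_normalClosure ⟨w, rfl⟩

end GroupPart

/-- The free Burnside group `B(n,3)`: the quotient of the free group on `n` generators by the
normal subgroup generated by all cubes. -/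
abbrev Burnside (n : ℕ) : Type :=
  PresentedGroup (Set.range fun x : FreeGroup (Fin n) => x ^ 3)

/-- In the free Burnside group `B(n,3)` of exponent 3, for any elements
`a, b, c` the triple commutator `((a,b),c)` is central, and `((x,r),x) = 1` for all `x, r`. -/
theorem stmt_14 (n : ℕ) :
    (∀ a b c : Burnside n, ⁅⁅a, b⁆, c⁆ ∈ Subgroup.center (Burnside n)) ∧
    (∀ x r : Burnside n, ⁅⁅x, r⁆, x⁆ = 1) := by
  have h3 : ∀ g : Burnside n, g ^ 3 = 1 := exp_three_pow
  constructor
  · intro a b c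
    rw [Subgroup.mem_center_iff]
    intro d
    have h := central_step h3 a b c d
    exact ((commutatorElement_eq_one_iff_commute.mp h).symm).eq
  · intro x r
    exact engel h3 x r
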